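/- Suppose (τ_1,...,τ_w) is a sequence of transpositions in S_d such that each τ_i lies in one of the pairwise commuting subgroups S_{A_1},...,S_{A_r} for a partition A_1,...,A_r of {1,...,d}. Then by applying braid moves σ_i (replacing (τ_i,τ_{i+1}) by (τ_{i+1}, τ_{i+1}τ_iτ_{i+1})), the sequence can be transformed into one where, for some integers w_1,...,w_r summing to w, the first w_1 entries lie in S_{A_1}, the next w_2 lie in S_{A_2}, and so on. -/

import Mathlib

/-- A single braid move: replace an adjacent pair `(a, b)` by `(b, b * a * b)`. -/
def BraidMove {G : Type*} [Group G] (l l' : List G) : Prop :=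
  ∃ (l1 l2 : List G) (a b : G), l = l1 ++ a :: b :: l2 ∧ l' = l1 ++ b :: (b * a * b) :: l2

namespace StdPosAux

variable {G : Type*} [Group G]

lemma braid_length {l l' : List G} (h : BraidMove l l') : l'.length = l.length := by
  obtain ⟨l1, l2, a, b, rfl, rfl⟩ := h; simp

lemma rtg_length {l l' : List G} (h : Relation.ReflTransGen BraidMove l l') :
    l'.length = l.length := by
  induction h with
  | refl => rfl
  | tail _ h ih => rw [braid_length h, ih]

lemma braid_cons (x : G) {l l' : List G} (h : BraidMove l l') :
    BraidMove (x :: l) (x :: l') := by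
  obtain ⟨l1, l2, a, b, rfl, rfl⟩ := h
  exact ⟨x :: l1, l2, a, b, rfl, rfl⟩

lemma rtg_cons (x : G) {l l' : List G} (h : Relation.ReflTransGen BraidMove l l') :
    Relation.ReflTransGen BraidMove (x :: l) (x :: l') := by
  induction h with
  | refl => exact .refl
  | tail _ h ih => exact ih.tail (braid_cons x h)

variable {d r : ℕ} (A : Fin r → Finset (Fin d))

/-- The relation: `g` is a swap supported in block `m`. -/
def R (g : Equiv.Perm (Fin d)) (m : Fin r) : Prop := g.IsSwap ∧ g.support ⊆ A m

lemma R.conj (hdisj : ∀ m n, m ≠ n → Disjoint (A m) (A n))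
    {a g : Equiv.Perm (Fin d)} {m n : Fin r} (ha : R A a m) (hg : R A g n)
    (hmn : m ≠ n) : R A (g * a * g) m := by
  have hg2 : g * g = 1 := by
    obtain ⟨x, y, hxy, rfl⟩ := hg.1
    exact Equiv.swap_mul_self x y
  have hginv : g⁻¹ = g := inv_eq_of_mul_eq_one_right hg2
  have key : g * a * g = g * a * g⁻¹ := by rw [hginv]
  rw [key]
  constructor
  · obtain ⟨u, v, huv, rfl⟩ := ha.1
    exact ⟨g u, g v, fun h => huv (g.injective h), (Equiv.swap_apply_apply g u v).symm⟩
  · rw [Equiv.Perm.support_conj]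
    intro z hz
    simp only [Finset.mem_map, Equiv.coe_toEmbedding] at hz
    obtain ⟨y, hy, rfl⟩ := hz
    have hyA : y ∈ A m := ha.2 hy
    have hyn : y ∉ g.support := fun h =>
      Finset.disjoint_left.1 (hdisj m n hmn) hyA (hg.2 h)
    rw [Equiv.Perm.notMem_support.1 hyn]
    exact hyA

/-- Insertion: insert `a` (with block `m`) into a sorted list. -/
lemma insert_sorted (hdisj : ∀ m n, m ≠ n → Disjoint (A m) (A n)) :
    ∀ (l : List (Equiv.Perm (Fin d))) (bs : List (Fin r)),
    List.Forall₂ (R A) l bs → bs.Pairwise (· ≤ ·) →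
    ∀ (a : Equiv.Perm (Fin d)) (m : Fin r), R A a m →
    ∃ l' bs', Relation.ReflTransGen BraidMove (a :: l) l' ∧
      List.Forall₂ (R A) l' bs' ∧ bs'.Pairwise (· ≤ ·) ∧ bs'.Perm (m :: bs) := by
  intro l
  induction l with
  | nil =>
    rintro bs hf _ a m ham
    cases hf
    exact ⟨[a], [m], .refl, .cons ham .nil, List.pairwise_singleton _ m, .refl _⟩
  | cons g t ih =>
    rintro bs hf hs a m ham
    rcases hf with _ | ⟨hgn, hft⟩
    rename_i n bs2
    by_cases hmn : m ≤ n
    · refine ⟨a :: g :: t, m :: n :: bs2, .refl, .cons ham (.cons hgn hft), ?_, .refl _⟩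
      exact List.pairwise_cons_cons_iff_of_trans.2 ⟨hmn, hs⟩
    · push_neg at hmn
      have hne : m ≠ n := hmn.ne'
      have hconj : R A (g * a * g) m := R.conj A hdisj ham hgn hne
      obtain ⟨l', bs', hmov, hf', hs', hperm⟩ :=
        ih bs2 hft hs.of_cons (g * a * g) m hconj
      refine ⟨g :: l', n :: bs', ?_, .cons hgn hf', ?_, ?_⟩
      · refine Relation.ReflTransGen.head ?_ (rtg_cons g hmov)
        exact ⟨[], t, a, g, rfl, rfl⟩
      · refine List.pairwise_cons.2 ⟨?_, hs'⟩
        intro c hc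
        have := hperm.mem_iff.1 hc
        rcases List.mem_cons.1 this with rfl | hc2
        · exact hmn.le
        · exact List.rel_of_pairwise_cons hs (a' := c) hc2
      · exact (hperm.cons n).trans (List.Perm.swap m n bs2)

lemma sort_all (hdisj : ∀ m n, m ≠ n → Disjoint (A m) (A n)) :
    ∀ (l : List (Equiv.Perm (Fin d))) (bs : List (Fin r)),
    List.Forall₂ (R A) l bs →
    ∃ l' bs', Relation.ReflTransGen BraidMove l l' ∧
      List.Forall₂ (R A) l' bs' ∧ bs'.Pairwise (· ≤ ·) := by
  intro l
  induction l with
  | nil => rintro bs hf; cases hf; exact ⟨[], [], .refl, .nil, List.Pairwise.nil⟩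
  | cons a t ih =>
    rintro bs hf
    rcases hf with _ | ⟨ham, hft⟩
    rename_i m bs2
    obtain ⟨t', bs2', hmov, hf', hs'⟩ := ih bs2 hft
    obtain ⟨l', bs', hmov2, hf2, hs2, _⟩ := insert_sorted A hdisj t' bs2' hf' hs' a m ham
    exact ⟨l', bs', (rtg_cons a hmov).trans hmov2, hf2, hs2⟩

end StdPosAux

/-- A sequence of transpositions, each lying in one of the factors `S_{A_m}` for a
partition `A_1,...,A_r`, can be brought into standard position by braid moves:
the entries in `S_{A_1}` come first, then those in `S_{A_2}`, and so on. -/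
theorem standard_position (d r w : ℕ) (A : Fin r → Finset (Fin d))
    (hdisj : ∀ m n, m ≠ n → Disjoint (A m) (A n))
    (hcover : Finset.univ.biUnion A = Finset.univ)
    (τ : Fin w → Equiv.Perm (Fin d))
    (hswap : ∀ i, (τ i).IsSwap)
    (hblk : ∀ i, ∃ m, (τ i).support ⊆ A m) :
    ∃ (τ' : Fin w → Equiv.Perm (Fin d)) (b : Fin w → Fin r),
      Relation.ReflTransGen BraidMove (List.ofFn τ) (List.ofFn τ') ∧
      Monotone b ∧ ∀ i, (τ' i).support ⊆ A (b i) := by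
  classical
  choose blk hblk' using hblk
  have hf0 : List.Forall₂ (StdPosAux.R A) (List.ofFn τ) (List.ofFn blk) := by
    rw [List.forall₂_iff_get]
    refine ⟨by simp, ?_⟩
    intro i h1 h2
    simp only [List.get_eq_getElem, List.getElem_ofFn]
    exact ⟨hswap _, hblk' _⟩
  obtain ⟨l', bs', hmov, hf', hs'⟩ := StdPosAux.sort_all A hdisj _ _ hf0
  have hlen : l'.length = w := by
    have := StdPosAux.rtg_length hmov; simpa using this
  rw [List.forall₂_iff_get] at hf'
  obtain ⟨hlen2, hR⟩ := hf'
  refine ⟨fun i => l'.get ⟨i, by omega⟩, fun i => bs'.get ⟨i, by omega⟩, ?_, ?_, ?_⟩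
  · have : List.ofFn (fun i : Fin w => l'.get ⟨i, by omega⟩) = l' := by
      apply List.ext_get (by simp [hlen])
      intro i h1 h2
      simp
    rwa [this]
  · intro i j hij
    rcases eq_or_lt_of_le hij with rfl | hlt
    · exact le_refl _
    · have := List.pairwise_iff_get.1 hs' ⟨i, by omega⟩ ⟨j, by omega⟩ (by simpa using hlt)
      exact this
  · intro i
    exact (hR i (by omega) (by omega)).2
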